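/- Let p be an odd prime and let g(x) = x^{p+1}/(x^p + x) and h(x) = (x^{p-1} - 1)/(x^{p-1} + 1) be rational functions over F_p. Then for any α in a field of characteristic p with α^p = -α and any x with x^p + x ≠ 0 and (x+α)^p + (x+α) ≠ 0, one has g(x + α) = g(x) + α·h(x) - α^2/(x^p + x). -/
import Mathlib


/-- For an odd prime `p`, in a field of characteristic `p`: if `α^p = -α`,
`x^p + x ≠ 0` and `(x+α)^p + (x+α) ≠ 0`, then
`g(x + α) = g(x) + α·h(x) - α²/(x^p + x)` where `g(x) = x^(p+1)/(x^p + x)` and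
`h(x) = (x^(p-1) - 1)/(x^(p-1) + 1)`. -/
theorem stmt_6 (p : ℕ) (hp : p.Prime) (hodd : Odd p)
    (F : Type*) [Field F] [CharP F p] (α x : F)
    (hα : α ^ p = -α) (hx : x ^ p + x ≠ 0)
    (hxα : (x + α) ^ p + (x + α) ≠ 0) :
    (x + α) ^ (p + 1) / ((x + α) ^ p + (x + α)) =
      x ^ (p + 1) / (x ^ p + x)
        + α * ((x ^ (p - 1) - 1) / (x ^ (p - 1) + 1))
        - α ^ 2 / (x ^ p + x) := by
  haveI : Fact p.Prime := ⟨hp⟩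
  have hp0 : p ≠ 0 := hp.ne_zero
  have hfrob : (x + α) ^ p = x ^ p + α ^ p := add_pow_char x α p
  have hkey : x ^ p = x ^ (p - 1) * x := by
    rw [← pow_succ]; congr 1; omega
  have hfact : x ^ p + x = (x ^ (p - 1) + 1) * x := by rw [hkey]; ring
  have hx0 : x ≠ 0 := by
    rintro rfl
    simp [zero_pow hp0] at hx
  have hd2 : x ^ (p - 1) + 1 ≠ 0 := by
    intro h
    rw [hfact, h, zero_mul] at hx
    exact hx rfl
  have hden : (x + α) ^ p + (x + α) = x ^ p + x := by
    rw [hfrob, hα]; ring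
  have hnum : (x + α) ^ (p + 1) = (x ^ p - α) * (x + α) := by
    rw [pow_succ, hfrob, hα]; ring
  rw [hden, hnum, pow_succ]
  field_simp
  rw [hkey]
  ring
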